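/- arXiv:1302.6225 — 3 statements merged into one kernel-verified Lean document; each statement's English description precedes it below -/
import Mathlib

section
/- The sum over all d-partitions λ of n of the square of the number of standard d-tableaux of shape λ equals d^n · n!. -/
open Finset Nat

/-- A `d`-partition of `n`: a `d`-tuple of partitions (each given by its antitone sequence of
row lengths, 0-indexed, vanishing from row `n` on) whose sizes add up to `n`. -/
structure DPartition (d n : ℕ) where
  part : Fin d → ℕ → ℕ
  antitone : ∀ k, Antitone (part k)
  vanish : ∀ k i, n ≤ i → part k i = 0
  size : ∑ k : Fin d, ∑ i ∈ Finset.range n, part k i = n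

/-- A standard `d`-tableau of shape `lam`: a filling of the nodes of `lam` by `1,…,n`, each
used exactly once, increasing along rows and down columns of every component (the value `0`
is assigned to non-nodes, so that a tableau is determined by its entries on the nodes). -/
structure StdDTableau (d n : ℕ) (lam : DPartition d n) where
  entry : Fin d → ℕ → ℕ → ℕ
  outside : ∀ k x y, ¬ y < lam.part k x → entry k x y = 0
  mem : ∀ k x y, y < lam.part k x → entry k x y ∈ Finset.Icc 1 n
  inj : ∀ k x y k' x' y', y < lam.part k x → y' < lam.part k' x' →
      entry k x y = entry k' x' y' → (k, x, y) = (k', x', y')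
  surj : ∀ m ∈ Finset.Icc 1 n, ∃ k x y, y < lam.part k x ∧ entry k x y = m
  row : ∀ k x y, y + 1 < lam.part k x → entry k x y < entry k x (y + 1)
  col : ∀ k x y, y < lam.part k (x + 1) → entry k x y < entry k (x + 1) y


section CellModel
variable {d : ℕ}

abbrev Cell (d : ℕ) := Fin d × ℕ × ℕ

def IsYoung (S : Finset (Cell d)) : Prop :=
  ∀ c ∈ S, ∀ x' ≤ c.2.1, ∀ y' ≤ c.2.2, (c.1, x', y') ∈ S

instance IsYoung.decPred : DecidablePred (IsYoung (d := d)) := fun S => by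
  unfold IsYoung; infer_instance

lemma IsYoung.mem {S : Finset (Cell d)} (h : IsYoung S) {k x y} (hc : (k, x, y) ∈ S)
    {x' y'} (hx : x' ≤ x) (hy : y' ≤ y) : (k, x', y') ∈ S :=
  h (k, x, y) hc x' hx y' hy

lemma IsYoung.empty : IsYoung (∅ : Finset (Cell d)) := by intro c hc; simp at hc

lemma IsYoung.inter {S T : Finset (Cell d)} (hS : IsYoung S) (hT : IsYoung T) :
    IsYoung (S ∩ T) := by
  rintro ⟨k, x, y⟩ hc x' hx y' hy
  simp only [mem_inter] at hc ⊢
  exact ⟨hS.mem hc.1 hx hy, hT.mem hc.2 hx hy⟩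

lemma IsYoung.union {S T : Finset (Cell d)} (hS : IsYoung S) (hT : IsYoung T) :
    IsYoung (S ∪ T) := by
  rintro ⟨k, x, y⟩ hc x' hx y' hy
  simp only [mem_union] at hc ⊢
  rcases hc with h | h
  · exact Or.inl (hS.mem h hx hy)
  · exact Or.inr (hT.mem h hx hy)

lemma IsYoung.coord_bound {S : Finset (Cell d)} (h : IsYoung S) {k x y}
    (hc : (k, x, y) ∈ S) : x < S.card ∧ y < S.card := by
  constructor
  · have hsub : (range (x + 1)).image (fun x' => ((k, x', y) : Cell d)) ⊆ S := by
      intro c hc'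
      simp only [mem_image, mem_range] at hc'
      obtain ⟨x', hx', rfl⟩ := hc'
      exact h.mem hc (Nat.lt_succ_iff.mp hx') le_rfl
    have := card_le_card hsub
    rwa [Finset.card_image_of_injective _ (fun a b hab => by simpa using hab), card_range,
      Nat.succ_le_iff] at this
  · have hsub : (range (y + 1)).image (fun y' => ((k, x, y') : Cell d)) ⊆ S := by
      intro c hc'
      simp only [mem_image, mem_range] at hc'
      obtain ⟨y', hy', rfl⟩ := hc'
      exact h.mem hc le_rfl (Nat.lt_succ_iff.mp hy')
    have := card_le_card hsub
    rwa [Finset.card_image_of_injective _ (fun a b hab => by simpa using hab), card_range,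
      Nat.succ_le_iff] at this

lemma addable_coord_bound {S : Finset (Cell d)} {b : Cell d} (hb : b ∉ S)
    (h : IsYoung (insert b S)) : b.2.1 ≤ S.card ∧ b.2.2 ≤ S.card := by
  obtain ⟨k, x, y⟩ := b
  have h2 := h.coord_bound (mem_insert_self (k,x,y) S)
  rw [card_insert_of_notMem hb] at h2
  exact ⟨show x ≤ S.card by omega, show y ≤ S.card by omega⟩

/-- number of standard tableaux (chains) of shape `S`, length `m`. -/
def nSYT (d : ℕ) : ℕ → Finset (Cell d) → ℕ
  | 0, S => if S = ∅ then 1 else 0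
  | m + 1, S => if IsYoung S then ∑ b ∈ S, nSYT d m (S.erase b) else 0

lemma nSYT_ne_zero {m : ℕ} {S : Finset (Cell d)} (h : nSYT d m S ≠ 0) :
    IsYoung S ∧ S.card = m := by
  induction m generalizing S with
  | zero =>
    rw [nSYT] at h
    split at h
    · subst ‹S = ∅›; exact ⟨IsYoung.empty, rfl⟩
    · simp at h
  | succ m ih =>
    rw [nSYT] at h
    split at h
    · refine ⟨‹_›, ?_⟩
      obtain ⟨b, hb, hne⟩ := exists_ne_zero_of_sum_ne_zero h
      have := (ih hne).2
      rw [card_erase_of_mem hb] at this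
      have hpos := card_pos.mpr ⟨b, hb⟩
      omega
    · simp at h

def box (d n : ℕ) : Finset (Cell d) := univ ×ˢ range n ×ˢ range n

lemma mem_box {n : ℕ} {c : Cell d} : c ∈ box d n ↔ c.2.1 < n ∧ c.2.2 < n := by
  obtain ⟨k, x, y⟩ := c
  simp [_root_.box]

lemma young_subset_box {S : Finset (Cell d)} (h : IsYoung S) : S ⊆ box d S.card := by
  rintro ⟨k, x, y⟩ hc
  rw [mem_box]
  exact h.coord_bound hc

def corners (S : Finset (Cell d)) : Finset (Cell d) :=
  S.filter (fun b => IsYoung (S.erase b))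

def addables (S : Finset (Cell d)) : Finset (Cell d) :=
  (box d (S.card + 1)).filter (fun b => b ∉ S ∧ IsYoung (insert b S))

lemma mem_addables {S : Finset (Cell d)} {b : Cell d} :
    b ∈ addables S ↔ b ∉ S ∧ IsYoung (insert b S) := by
  rw [addables, mem_filter, mem_box]
  constructor
  · tauto
  · rintro ⟨h1, h2⟩
    have := addable_coord_bound h1 h2
    exact ⟨⟨by omega, by omega⟩, h1, h2⟩

lemma mem_corners {S : Finset (Cell d)} {b : Cell d} :
    b ∈ corners S ↔ b ∈ S ∧ IsYoung (S.erase b) := by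
  rw [corners, mem_filter]

end CellModel
section CornerCount
variable {d : ℕ}

lemma downset_eq_range {t : Finset ℕ} (h : ∀ y ∈ t, ∀ z ≤ y, z ∈ t) :
    t = range t.card := by
  ext a
  simp only [mem_range]
  constructor
  · intro ha
    have hsub : range (a + 1) ⊆ t := fun z hz =>
      h a ha z (Nat.lt_succ_iff.mp (mem_range.mp hz))
    have := card_le_card hsub
    rw [card_range] at this; omega
  · intro ha
    by_contra hna
    have hsub : t ⊆ range a := by
      intro z hz
      rw [mem_range]
      by_contra hza
      exact hna (h z hz a (by omega))
    have := card_le_card hsub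
    rw [card_range] at this; omega

/-- length of row `x` of component `k`. -/
def len (S : Finset (Cell d)) (k : Fin d) (x : ℕ) : ℕ :=
  ((range S.card).filter (fun y => (k, x, y) ∈ S)).card

lemma IsYoung.mem_iff_lt_len {S : Finset (Cell d)} (h : IsYoung S) {k x y} :
    (k, x, y) ∈ S ↔ y < len S k x := by
  have hds : ∀ y' ∈ (range S.card).filter (fun y => (k, x, y) ∈ S), ∀ z ≤ y',
      z ∈ (range S.card).filter (fun y => (k, x, y) ∈ S) := by
    intro y' hy' z hz
    rw [mem_filter, mem_range] at hy' ⊢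
    exact ⟨by omega, h.mem hy'.2 le_rfl hz⟩
  have := downset_eq_range hds
  constructor
  · intro hm
    have hy : y ∈ (range S.card).filter (fun y => (k, x, y) ∈ S) :=
      mem_filter.mpr ⟨mem_range.mpr (h.coord_bound hm).2, hm⟩
    rw [this, mem_range] at hy
    exact hy
  · intro hy
    have : y ∈ (range S.card).filter (fun y => (k, x, y) ∈ S) := by
      rw [this, mem_range]; exact hy
    exact (mem_filter.mp this).2

lemma IsYoung.len_antitone {S : Finset (Cell d)} (h : IsYoung S) (k : Fin d) :
    Antitone (len S k) := by
  intro x x' hx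
  apply card_le_card
  intro y hy
  rw [mem_filter] at hy ⊢
  exact ⟨hy.1, h.mem hy.2 hx le_rfl⟩

def addRows (S : Finset (Cell d)) (k : Fin d) : Finset ℕ :=
  (range (S.card + 1)).filter (fun x => x = 0 ∨ len S k x < len S k (x - 1))

def cornRows (S : Finset (Cell d)) (k : Fin d) : Finset ℕ :=
  (range S.card).filter (fun x => len S k (x + 1) < len S k x)

lemma mem_addables_iff_len {S : Finset (Cell d)} (h : IsYoung S) {k x y} :
    (k, x, y) ∈ addables S ↔ y = len S k x ∧ (x = 0 ∨ len S k x < len S k (x - 1)) := by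
  rw [mem_addables]
  constructor
  · rintro ⟨hnm, hY⟩
    have hyb : y ≤ S.card ∧ x ≤ S.card := by
      have := addable_coord_bound hnm hY; exact ⟨this.2, this.1⟩
    have hyge : len S k x ≤ y := by
      by_contra hlt
      exact hnm (h.mem_iff_lt_len.mpr (by omega))
    have hyle : y ≤ len S k x := by
      have hsub : range y ⊆ (range S.card).filter (fun y' => (k, x, y') ∈ S) := by
        intro y' hy'
        rw [mem_range] at hy'
        rw [mem_filter, mem_range]
        refine ⟨by omega, ?_⟩
        have : ((k, x, y') : Cell d) ∈ insert (k, x, y) S :=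
          hY.mem (mem_insert_self _ _) le_rfl (le_of_lt hy')
        rcases mem_insert.mp this with heq | hm
        · exfalso; have : y' = y := by simpa using heq
          omega
        · exact hm
      have := card_le_card hsub
      rwa [card_range] at this
    refine ⟨by omega, ?_⟩
    rcases Nat.eq_zero_or_pos x with hx0 | hxpos
    · exact Or.inl hx0
    · refine Or.inr ?_
      have : ((k, x - 1, y) : Cell d) ∈ insert (k, x, y) S :=
        hY.mem (mem_insert_self _ _) (by omega) le_rfl
      rcases mem_insert.mp this with heq | hm
      · exfalso; have : x - 1 = x := by simpa using heq
        omega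
      · have := h.mem_iff_lt_len.mp hm
        omega
  · rintro ⟨rfl, hcond⟩
    have hnm : ((k, x, len S k x) : Cell d) ∉ S := by
      rw [h.mem_iff_lt_len]; omega
    refine ⟨hnm, ?_⟩
    rintro ⟨k', x', y'⟩ hc a ha b hb
    simp only at ha hb
    rcases mem_insert.mp hc with heq | hm
    · simp only [Prod.mk.injEq] at heq
      obtain ⟨rfl, rfl, rfl⟩ := heq
      show ((k', a, b) : Cell d) ∈ insert ((k', x', len S k' x') : Cell d) S
      by_cases hax : a = x'
      · subst hax
        rcases Nat.lt_or_ge b (len S k' a) with hblt | hbge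
        · exact mem_insert_of_mem (h.mem_iff_lt_len.mpr hblt)
        · have : b = len S k' a := by omega
          subst this; exact mem_insert_self _ _
      · have hax' : a < x' := by omega
        have hx0 : x' ≠ 0 := by omega
        have hcond' : len S k' x' < len S k' (x' - 1) := by tauto
        have hmono : len S k' (x' - 1) ≤ len S k' a := h.len_antitone k' (by omega)
        exact mem_insert_of_mem (h.mem_iff_lt_len.mpr (by omega))
    · exact mem_insert_of_mem (h.mem hm ha hb)

lemma mem_corners_iff_len {S : Finset (Cell d)} (h : IsYoung S) {k x y} :
    (k, x, y) ∈ corners S ↔ y + 1 = len S k x ∧ len S k (x + 1) < len S k x := by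
  rw [mem_corners]
  constructor
  · rintro ⟨hm, hY⟩
    have hy : y < len S k x := h.mem_iff_lt_len.mp hm
    have hyge : len S k x ≤ y + 1 := by
      by_contra hlt
      have hm1 : ((k, x, y + 1) : Cell d) ∈ S.erase (k, x, y) := by
        rw [mem_erase]
        exact ⟨by simp, h.mem_iff_lt_len.mpr (by omega)⟩
      have := hY.mem hm1 le_rfl (Nat.le_succ y)
      rw [mem_erase] at this
      simp at this
    refine ⟨by omega, ?_⟩
    by_contra hge
    have hm1 : ((k, x + 1, y) : Cell d) ∈ S.erase (k, x, y) := by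
      rw [mem_erase]
      refine ⟨by simp, h.mem_iff_lt_len.mpr (by omega)⟩
    have := hY.mem hm1 (Nat.le_succ x) le_rfl
    rw [mem_erase] at this
    simp at this
  · rintro ⟨hlen, hcorn⟩
    have hm : ((k, x, y) : Cell d) ∈ S := h.mem_iff_lt_len.mpr (by omega)
    refine ⟨hm, ?_⟩
    rintro ⟨k'', cx, cy⟩ hc a ha b hb
    simp only at ha hb
    rw [mem_erase] at hc
    obtain ⟨hne, hcS⟩ := hc
    show ((k'', a, b) : Cell d) ∈ S.erase (k, x, y)
    rw [mem_erase]
    refine ⟨?_, h.mem hcS ha hb⟩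
    intro heq
    simp only [Prod.mk.injEq] at heq
    obtain ⟨rfl, rfl, rfl⟩ := heq
    apply hne
    have hcy : cy < len S k'' cx := h.mem_iff_lt_len.mp hcS
    rcases Nat.lt_or_ge a cx with hax | hax
    · have h1 : len S k'' cx ≤ len S k'' (a + 1) := h.len_antitone k'' (by omega)
      omega
    · have : a = cx := by omega
      subst this
      have : b = cy := by omega
      subst this
      rfl

lemma card_addables {S : Finset (Cell d)} (h : IsYoung S) :
    (addables S).card = ∑ k : Fin d, (addRows S k).card := by
  rw [← Finset.card_sigma]
  apply card_bij (fun b _ => (⟨b.1, b.2.1⟩ : Σ _ : Fin d, ℕ))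
  · rintro ⟨k, x, y⟩ hb
    dsimp only
    have hb' := (mem_addables_iff_len h).mp hb
    rw [Finset.mem_sigma]
    refine ⟨mem_univ _, ?_⟩
    rw [addRows, mem_filter, mem_range]
    dsimp only
    refine ⟨?_, hb'.2⟩
    rcases hb'.2 with h0 | hlt
    · omega
    · have hpos : 0 < len S k (x - 1) := by omega
      have : ((k, x - 1, 0) : Cell d) ∈ S := h.mem_iff_lt_len.mpr hpos
      have := (h.coord_bound this).1
      omega
  · rintro ⟨k, x, y⟩ hb ⟨k', x', y'⟩ hb' heq
    dsimp only at heq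
    simp only [Sigma.mk.inj_iff] at heq
    obtain ⟨rfl, hxx⟩ := heq
    rw [heq_eq_eq] at hxx
    subst hxx
    have h1 := ((mem_addables_iff_len h).mp hb).1
    have h2 := ((mem_addables_iff_len h).mp hb').1
    simp [h1, h2]
  · rintro ⟨k, x⟩ hkx
    rw [Finset.mem_sigma, addRows, mem_filter] at hkx
    dsimp only at hkx
    exact ⟨(k, x, len S k x), (mem_addables_iff_len h).mpr ⟨rfl, hkx.2.2⟩, rfl⟩

lemma card_corners {S : Finset (Cell d)} (h : IsYoung S) :
    (corners S).card = ∑ k : Fin d, (cornRows S k).card := by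
  rw [← Finset.card_sigma]
  apply card_bij (fun b _ => (⟨b.1, b.2.1⟩ : Σ _ : Fin d, ℕ))
  · rintro ⟨k, x, y⟩ hb
    dsimp only
    have hb' := (mem_corners_iff_len h).mp hb
    rw [Finset.mem_sigma]
    refine ⟨mem_univ _, ?_⟩
    rw [cornRows, mem_filter, mem_range]
    dsimp only
    refine ⟨?_, hb'.2⟩
    exact (h.coord_bound ((mem_corners.mp hb).1)).1
  · rintro ⟨k, x, y⟩ hb ⟨k', x', y'⟩ hb' heq
    dsimp only at heq
    simp only [Sigma.mk.inj_iff] at heq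
    obtain ⟨rfl, hxx⟩ := heq
    rw [heq_eq_eq] at hxx
    subst hxx
    have h1 := ((mem_corners_iff_len h).mp hb).1
    have h2 := ((mem_corners_iff_len h).mp hb').1
    have : y = y' := by omega
    simp [this]
  · rintro ⟨k, x⟩ hkx
    rw [Finset.mem_sigma, cornRows, mem_filter] at hkx
    dsimp only at hkx
    have := hkx.2.2
    refine ⟨(k, x, len S k x - 1), (mem_corners_iff_len h).mpr ⟨by omega, this⟩, rfl⟩

lemma addRows_eq {S : Finset (Cell d)} (h : IsYoung S) (k : Fin d) :
    addRows S k = insert 0 ((cornRows S k).image (· + 1)) := by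
  ext x
  rw [addRows, mem_filter, mem_range, mem_insert, mem_image]
  constructor
  · rintro ⟨hx, h0 | hlt⟩
    · exact Or.inl h0
    · rcases Nat.eq_zero_or_pos x with h0 | hpos
      · exact Or.inl h0
      · refine Or.inr ⟨x - 1, ?_, by omega⟩
        rw [cornRows, mem_filter, mem_range]
        have : x - 1 + 1 = x := by omega
        rw [this]
        exact ⟨by omega, hlt⟩
  · rintro (h0 | ⟨z, hz, rfl⟩)
    · subst h0; exact ⟨by omega, Or.inl rfl⟩
    · rw [cornRows, mem_filter, mem_range] at hz
      refine ⟨by omega, Or.inr ?_⟩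
      simpa using hz.2

lemma corner_count {S : Finset (Cell d)} (h : IsYoung S) :
    (addables S).card = (corners S).card + d := by
  rw [card_addables h, card_corners h]
  have : ∀ k : Fin d, (addRows S k).card = (cornRows S k).card + 1 := by
    intro k
    rw [addRows_eq h k, card_insert_of_notMem (by simp), 
      Finset.card_image_of_injective _ (add_left_injective 1)]
  simp only [this, Finset.sum_add_distrib, Finset.sum_const, Finset.card_fin,
    smul_eq_mul, mul_one]

end CornerCount
section Key
variable {d : ℕ}

lemma erase_insert_comm {b b' : Cell d} {S : Finset (Cell d)} (hne : b ≠ b') :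
    (insert b S).erase b' = insert b (S.erase b') := by
  ext c
  simp only [mem_erase, mem_insert]
  constructor
  · rintro ⟨h1, h2 | h3⟩
    · exact Or.inl h2
    · exact Or.inr ⟨h1, h3⟩
  · rintro (rfl | ⟨h1, h2⟩)
    · exact ⟨hne, Or.inl rfl⟩
    · exact ⟨h1, Or.inr h2⟩

lemma key_lemma : ∀ m : ℕ, ∀ S : Finset (Cell d), IsYoung S → S.card = m →
    ∑ b ∈ addables S, nSYT d (m + 1) (insert b S) = d * (m + 1) * nSYT d m S := by
  intro m
  induction m with
  | zero =>
    intro S hY hcard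
    rw [Finset.card_eq_zero] at hcard
    subst hcard
    have h1 : ∀ b ∈ addables (∅ : Finset (Cell d)), nSYT d 1 (insert b ∅) = 1 := by
      intro b hb
      rw [mem_addables] at hb
      rw [nSYT, if_pos hb.2]
      simp [nSYT, Finset.filter_singleton, Finset.erase_singleton]
    rw [Finset.sum_congr rfl h1, Finset.sum_const, smul_eq_mul, mul_one]
    have hcc := corner_count (IsYoung.empty (d := d))
    have hc : corners (∅ : Finset (Cell d)) = ∅ := by simp [corners]
    rw [hc, card_empty] at hcc
    rw [hcc]
    simp [nSYT]
  | succ m ih =>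
    intro S hY hcard
    have hLHS : ∑ b ∈ addables S, nSYT d (m + 1 + 1) (insert b S)
        = (addables S).card * nSYT d (m + 1) S
          + ∑ b ∈ addables S, ∑ b' ∈ S, nSYT d (m + 1) ((insert b S).erase b') := by
      have hterm : ∀ b ∈ addables S, nSYT d (m + 1 + 1) (insert b S)
          = nSYT d (m + 1) S + ∑ b' ∈ S, nSYT d (m + 1) ((insert b S).erase b') := by
        intro b hb
        rw [mem_addables] at hb
        rw [nSYT, if_pos hb.2, Finset.sum_insert hb.1, Finset.erase_insert hb.1]
      rw [Finset.sum_congr rfl hterm, Finset.sum_add_distrib, Finset.sum_const, smul_eq_mul]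
    have hD : ∑ b ∈ addables S, ∑ b' ∈ S, nSYT d (m + 1) ((insert b S).erase b')
        = ∑ b' ∈ corners S, ∑ b ∈ (addables (S.erase b')).erase b',
            nSYT d (m + 1) (insert b (S.erase b')) := by
      rw [Finset.sum_sigma', Finset.sum_sigma']
      refine Finset.sum_bij_ne_zero (fun p _ _ => ⟨p.2, p.1⟩) ?_ ?_ ?_ ?_
      · rintro ⟨b, b'⟩ hp hne0
        rw [Finset.mem_sigma] at hp
        obtain ⟨hb, hb'⟩ := hp
        rw [mem_addables] at hb
        have hT := (nSYT_ne_zero hne0).1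
        have hbb' : b ≠ b' := fun h => hb.1 (h ▸ hb')
        have hUY : IsYoung (S.erase b') := by
          have heq : S.erase b' = S ∩ (insert b S).erase b' := by
            ext c
            simp only [mem_erase, mem_inter, mem_insert]
            constructor
            · rintro ⟨h1, h2⟩
              exact ⟨h2, h1, Or.inr h2⟩
            · rintro ⟨h1, h2, _⟩
              exact ⟨h2, h1⟩
          rw [heq]
          exact hY.inter hT
        rw [Finset.mem_sigma]
        dsimp only
        constructor
        · rw [mem_corners]; exact ⟨hb', hUY⟩
        · rw [mem_erase, mem_addables]
          refine ⟨hbb', fun hmem => hb.1 (mem_of_mem_erase hmem), ?_⟩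
          rw [← erase_insert_comm hbb']
          exact hT
      · rintro ⟨b1, b1'⟩ h1 h1' ⟨b2, b2'⟩ h2 h2' heq
        dsimp only at heq
        simp only [Sigma.mk.inj_iff, heq_eq_eq] at heq
        simp [heq.1, heq.2]
      · rintro ⟨b', b⟩ hq hne0
        rw [Finset.mem_sigma] at hq
        obtain ⟨hb', hb⟩ := hq
        rw [mem_corners] at hb'
        rw [mem_erase] at hb
        obtain ⟨hbb', hbmem⟩ := hb
        rw [mem_addables] at hbmem
        obtain ⟨hbU, hYins⟩ := hbmem
        have hbS : b ∉ S := fun hbS => hbU (mem_erase.mpr ⟨hbb', hbS⟩)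
        refine ⟨⟨b, b'⟩, ?_, ?_, rfl⟩
        · rw [Finset.mem_sigma]
          dsimp only
          refine ⟨?_, hb'.1⟩
          rw [mem_addables]
          refine ⟨hbS, ?_⟩
          have heq : insert b S = insert b (S.erase b') ∪ S := by
            ext c
            simp only [mem_insert, mem_union, mem_erase]
            constructor
            · rintro (rfl | h)
              · exact Or.inl (Or.inl rfl)
              · exact Or.inr h
            · rintro ((rfl | ⟨_, h⟩) | h)
              · exact Or.inl rfl
              · exact Or.inr h
              · exact Or.inr h
          rw [heq]
          exact hYins.union hY
        · rw [erase_insert_comm hbb']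
          exact hne0
      · rintro ⟨b, b'⟩ hp hne0
        rw [Finset.mem_sigma] at hp
        rw [mem_addables] at hp
        have hbb' : b ≠ b' := fun h => hp.1.1 (h ▸ hp.2)
        dsimp only
        rw [erase_insert_comm hbb']
    have hDb : ∀ b' ∈ corners S,
        (∑ b ∈ (addables (S.erase b')).erase b', nSYT d (m + 1) (insert b (S.erase b')))
          + nSYT d (m + 1) S = d * (m + 1) * nSYT d m (S.erase b') := by
      intro b' hb'
      rw [mem_corners] at hb'
      have hcardU : (S.erase b').card = m := by
        rw [card_erase_of_mem hb'.1]; omega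
      have hb'add : b' ∈ addables (S.erase b') := by
        rw [mem_addables]
        refine ⟨notMem_erase _ _, ?_⟩
        rw [insert_erase hb'.1]
        exact hY
      have hih := ih (S.erase b') hb'.2 hcardU
      rw [← hih, ← Finset.add_sum_erase _ _ hb'add, insert_erase hb'.1, add_comm]
    have hrec : nSYT d (m + 1) S = ∑ b' ∈ corners S, nSYT d m (S.erase b') := by
      rw [nSYT, if_pos hY]
      symm
      apply Finset.sum_subset (filter_subset _ _)
      intro b' hb'S hb'nc
      by_contra hne0
      exact hb'nc (mem_filter.mpr ⟨hb'S, (nSYT_ne_zero hne0).1⟩)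
    have hsum : (∑ b ∈ addables S, ∑ b' ∈ S, nSYT d (m + 1) ((insert b S).erase b'))
        + (corners S).card * nSYT d (m + 1) S = d * (m + 1) * nSYT d (m + 1) S := by
      rw [hD]
      calc (∑ b' ∈ corners S, ∑ b ∈ (addables (S.erase b')).erase b',
              nSYT d (m + 1) (insert b (S.erase b')))
            + (corners S).card * nSYT d (m + 1) S
          = ∑ b' ∈ corners S, ((∑ b ∈ (addables (S.erase b')).erase b',
              nSYT d (m + 1) (insert b (S.erase b'))) + nSYT d (m + 1) S) := by
            rw [Finset.sum_add_distrib, Finset.sum_const, smul_eq_mul]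
        _ = ∑ b' ∈ corners S, d * (m + 1) * nSYT d m (S.erase b') :=
            Finset.sum_congr rfl hDb
        _ = d * (m + 1) * ∑ b' ∈ corners S, nSYT d m (S.erase b') := by
            rw [Finset.mul_sum]
        _ = d * (m + 1) * nSYT d (m + 1) S := by rw [← hrec]
    rw [hLHS, corner_count hY]
    have hexp : d * (m + 1 + 1) * nSYT d (m + 1) S
        = d * (m + 1) * nSYT d (m + 1) S + d * nSYT d (m + 1) S := by ring
    rw [hexp, ← hsum]
    ring
end Key
section MainCount
variable {d : ℕ}

def Esum (d n : ℕ) : ℕ := ∑ S ∈ (box d n).powerset, nSYT d n S * nSYT d n S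

lemma box_mono {n m : ℕ} (h : n ≤ m) : box d n ⊆ box d m := by
  intro c hc
  rw [mem_box] at hc ⊢
  omega

lemma Esum_zero : Esum d 0 = 1 := by
  have : box d 0 = ∅ := by
    ext c; rw [mem_box]; simp
  rw [Esum, this]
  simp [nSYT]

lemma Esum_succ (n : ℕ) : Esum d (n + 1) = d * (n + 1) * Esum d n := by
  have h1 : ∀ S : Finset (Cell d), nSYT d (n + 1) S * nSYT d (n + 1) S
      = ∑ b ∈ S, nSYT d (n + 1) S * nSYT d n (S.erase b) := by
    intro S
    by_cases hY : IsYoung S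
    · nth_rewrite 2 [nSYT]
      rw [if_pos hY, Finset.mul_sum]
    · rw [nSYT, if_neg hY]
      simp
  have h2 : Esum d (n + 1)
      = ∑ U ∈ (box d (n + 1)).powerset, ∑ b ∈ addables U,
          nSYT d (n + 1) (insert b U) * nSYT d n U := by
    rw [Esum, Finset.sum_congr rfl (fun S _ => h1 S), Finset.sum_sigma', Finset.sum_sigma']
    refine Finset.sum_bij_ne_zero (fun p _ _ => ⟨p.1.erase p.2, p.2⟩) ?_ ?_ ?_ ?_
    · rintro ⟨S, b⟩ hp hne0
      rw [Finset.mem_sigma] at hp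
      obtain ⟨hS, hb⟩ := hp
      rw [mem_powerset] at hS
      have hmul := mul_ne_zero_iff.mp hne0
      have hSY := nSYT_ne_zero hmul.1
      have hUY := nSYT_ne_zero hmul.2
      rw [Finset.mem_sigma]
      dsimp only
      constructor
      · rw [mem_powerset]
        exact (erase_subset _ _).trans hS
      · rw [mem_addables]
        refine ⟨notMem_erase _ _, ?_⟩
        rw [insert_erase hb]
        exact hSY.1
    · rintro ⟨S1, b1⟩ hp1 hne1 ⟨S2, b2⟩ hp2 hne2 heq
      rw [Finset.mem_sigma] at hp1 hp2
      dsimp only at hp1 hp2 heq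
      simp only [Sigma.mk.inj_iff, heq_eq_eq] at heq
      obtain ⟨hU, rfl⟩ := heq
      have : S1 = S2 := by
        rw [← insert_erase hp1.2, ← insert_erase hp2.2, hU]
      simp [this]
    · rintro ⟨U, b⟩ hq hne0
      rw [Finset.mem_sigma] at hq
      obtain ⟨hU, hb⟩ := hq
      rw [mem_addables] at hb
      have hmul := mul_ne_zero_iff.mp hne0
      have hSY := nSYT_ne_zero hmul.1
      refine ⟨⟨insert b U, b⟩, ?_, ?_, ?_⟩
      · rw [Finset.mem_sigma]
        dsimp only
        constructor
        · rw [mem_powerset]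
          have := young_subset_box hSY.1
          rw [hSY.2] at this
          exact this
        · exact mem_insert_self _ _
      · dsimp only
        rw [Finset.erase_insert hb.1]
        exact hne0
      · dsimp only
        rw [Finset.erase_insert hb.1]
    · rintro ⟨S, b⟩ hp hne0
      rw [Finset.mem_sigma] at hp
      dsimp only at hp ⊢
      rw [insert_erase hp.2]
  have h3 : ∀ U ∈ (box d (n + 1)).powerset, (∑ b ∈ addables U,
      nSYT d (n + 1) (insert b U) * nSYT d n U) = d * (n + 1) * (nSYT d n U * nSYT d n U) := by
    intro U _
    by_cases h0 : nSYT d n U = 0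
    · simp [h0]
    · obtain ⟨hUY, hUc⟩ := nSYT_ne_zero h0
      rw [← Finset.sum_mul, key_lemma n U hUY hUc]
      ring
  rw [h2, Finset.sum_congr rfl h3, ← Finset.mul_sum]
  congr 1
  rw [Esum]
  symm
  apply Finset.sum_subset
  · exact Finset.powerset_mono.mpr (box_mono (by omega))
  · intro U _ hU
    by_contra hne0
    have h0 : nSYT d n U ≠ 0 := fun h => hne0 (by rw [h]; ring)
    obtain ⟨hUY, hUc⟩ := nSYT_ne_zero h0
    apply hU
    rw [mem_powerset]
    have := young_subset_box hUY
    rw [hUc] at this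
    exact this.trans (box_mono (by omega))

lemma Esum_eq (n : ℕ) : Esum d n = d ^ n * n ! := by
  induction n with
  | zero => simp [Esum_zero]
  | succ n ih =>
    rw [Esum_succ, ih, Nat.factorial_succ]
    ring

end MainCount
section Chains
variable {d : ℕ}

def FChain (d n : ℕ) (S : Finset (Cell d)) :=
  { c : ℕ → Finset (Cell d) // c 0 = ∅ ∧ (∀ i, n ≤ i → c i = S) ∧
      ∀ i < n, IsYoung (c (i + 1)) ∧ c i ⊆ c (i + 1) ∧ (c (i + 1)).card = i + 1 }

lemma FChain.step_subset {n : ℕ} {S : Finset (Cell d)} (c : FChain d n S) (j : ℕ) :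
    c.1 j ⊆ c.1 (j + 1) := by
  obtain ⟨c, h0, hn, hstep⟩ := c
  show c j ⊆ c (j + 1)
  by_cases hj : j < n
  · exact (hstep j hj).2.1
  · rw [hn j (by omega), hn (j + 1) (by omega)]

lemma FChain.mono {n : ℕ} {S : Finset (Cell d)} (c : FChain d n S) {i j : ℕ} (hij : i ≤ j) :
    c.1 i ⊆ c.1 j := by
  induction j with
  | zero => have : i = 0 := by omega
            subst this; exact fun x h => h
  | succ j ihj =>
    rcases Nat.lt_or_ge i (j + 1) with h | h
    · exact (ihj (by omega)).trans (c.step_subset j)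
    · have : i = j + 1 := by omega
      subst this; exact fun x h => h

lemma FChain.subset_top {n : ℕ} {S : Finset (Cell d)} (c : FChain d n S) (i : ℕ) :
    c.1 i ⊆ S := by
  rcases Nat.lt_or_ge i n with h | h
  · have := c.mono (le_of_lt h)
    rwa [c.2.2.1 n le_rfl] at this
  · rw [c.2.2.1 i h]

instance FChain.finite {n : ℕ} {S : Finset (Cell d)} : Finite (FChain d n S) := by
  apply Finite.of_injective (fun c : FChain d n S =>
    (fun i : Fin (n + 1) => (⟨c.1 i, mem_powerset.mpr (c.subset_top i)⟩ : ↥S.powerset)))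
  intro c c' h
  apply Subtype.ext
  funext i
  rcases Nat.lt_or_ge i (n + 1) with hi | hi
  · have := congrFun h ⟨i, hi⟩
    simpa [Subtype.ext_iff] using this
  · rw [c.2.2.1 i (by omega), c'.2.2.1 i (by omega)]

lemma card_FChain : ∀ (n : ℕ) (S : Finset (Cell d)), Nat.card (FChain d n S) = nSYT d n S := by
  intro n
  induction n with
  | zero =>
    intro S
    rcases eq_or_ne S ∅ with rfl | hne
    · haveI : Unique (FChain d 0 (∅ : Finset (Cell d))) := by
        refine ⟨⟨⟨fun _ => ∅, rfl, fun i _ => rfl, fun i hi => absurd hi (by omega)⟩⟩, ?_⟩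
        rintro ⟨c, h0, hn, _⟩
        apply Subtype.ext
        funext i
        exact hn i (by omega)
      rw [Nat.card_unique, nSYT, if_pos rfl]
    · haveI : IsEmpty (FChain d 0 S) := by
        constructor
        rintro ⟨c, h0, hn, _⟩
        exact hne ((hn 0 le_rfl).symm.trans h0)
      rw [Nat.card_of_isEmpty, nSYT, if_neg hne]
  | succ n ih =>
    intro S
    by_cases hY : IsYoung S
    · by_cases hcard : S.card = n + 1
      · -- the bijection G
        have hG : ∃ G : (Σ b : {b // b ∈ S}, FChain d n (S.erase b.1)) → FChain d (n + 1) S,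
            Function.Bijective G := by
          refine ⟨fun x => ⟨fun i => if n < i then S else x.2.1 i, ?_, ?_, ?_⟩, ?_, ?_⟩
          · show (if n < 0 then S else x.2.1 0) = ∅
            rw [if_neg (by omega)]
            exact x.2.2.1
          · intro i hi
            show (if n < i then S else x.2.1 i) = S
            rw [if_pos (by omega)]
          · intro i hi
            obtain ⟨⟨b, hbS⟩, c'⟩ := x
            show IsYoung (if n < i + 1 then S else c'.1 (i + 1)) ∧
              (if n < i then S else c'.1 i) ⊆ (if n < i + 1 then S else c'.1 (i + 1)) ∧
              (if n < i + 1 then S else c'.1 (i + 1)).card = i + 1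
            have hc'n : c'.1 n = S.erase b := c'.2.2.1 n le_rfl
            rcases Nat.lt_or_ge i n with h | h
            · rw [if_neg (by omega), if_neg (by omega)]
              exact c'.2.2.2 i h
            · have hieq : i = n := by omega
              rw [if_pos (show n < i + 1 by omega), if_neg (show ¬ n < i by omega), hieq, hc'n]
              exact ⟨hY, erase_subset _ _, hcard⟩
          · -- injective
            rintro ⟨⟨b1, hb1⟩, c1⟩ ⟨⟨b2, hb2⟩, c2⟩ heq
            have hfun := congrFun (congrArg Subtype.val heq)
            have hn1 : c1.1 n = S.erase b1 := c1.2.2.1 n le_rfl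
            have hn2 : c2.1 n = S.erase b2 := c2.2.2.1 n le_rfl
            have hatn := hfun n
            dsimp only at hatn
            rw [if_neg (by omega), if_neg (by omega), hn1, hn2] at hatn
            have hb : b1 = b2 := by
              by_contra hne
              have h1 : b1 ∉ S.erase b1 := notMem_erase _ _
              rw [hatn] at h1
              exact h1 (mem_erase.mpr ⟨hne, hb1⟩)
            subst hb
            congr 1
            apply Subtype.ext
            funext i
            rcases Nat.lt_or_ge i (n + 1) with hi | hi
            · have := hfun i
              dsimp only at this
              rwa [if_neg (by omega), if_neg (by omega)] at this
            · rw [c1.2.2.1 i (by omega), c2.2.2.1 i (by omega)]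
          · -- surjective
            rintro ⟨c, h0, hn, hstep⟩
            have hsub : c n ⊆ S := by
              have := hstep n (by omega)
              rw [hn (n + 1) le_rfl] at this
              exact this.2.1
            have hcn : (c n).card = n := by
              rcases Nat.eq_zero_or_pos n with rfl | hpos
              · rw [h0, card_empty]
              · have := hstep (n - 1) (by omega)
                have heq : n - 1 + 1 = n := by omega
                rw [heq] at this
                exact this.2.2
            have hbex : ∃ b, b ∈ S ∧ b ∉ c n := by
              by_contra hall
              push_neg at hall
              have : S ⊆ c n := hall
              have := card_le_card this
              omega
            obtain ⟨b, hbS, hbc⟩ := hbex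
            have hceq : c n = S.erase b := by
              apply Finset.eq_of_subset_of_card_le
              · intro x hx
                rw [mem_erase]
                exact ⟨fun h => hbc (h ▸ hx), hsub hx⟩
              · rw [card_erase_of_mem hbS, hcard, hcn]
                omega
            refine ⟨⟨⟨b, hbS⟩, ⟨fun i => if n ≤ i then S.erase b else c i, ?_, ?_, ?_⟩⟩, ?_⟩
            · show (if n ≤ 0 then S.erase b else c 0) = ∅
              rcases Nat.eq_zero_or_pos n with rfl | hpos
              · rw [if_pos le_rfl, ← hceq, h0]
              · rw [if_neg (by omega)]
                exact h0
            · intro i hi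
              show (if n ≤ i then S.erase b else c i) = S.erase b
              rw [if_pos hi]
            · intro i hi
              show IsYoung (if n ≤ i + 1 then S.erase b else c (i + 1)) ∧
                (if n ≤ i then S.erase b else c i) ⊆ (if n ≤ i + 1 then S.erase b else c (i + 1)) ∧
                (if n ≤ i + 1 then S.erase b else c (i + 1)).card = i + 1
              rcases Nat.lt_or_ge (i + 1) n with h | h
              · rw [if_neg (by omega), if_neg (by omega)]
                exact hstep i (by omega)
              · have h1 : i + 1 = n := by omega
                rw [if_pos (by omega), if_neg (by omega), ← hceq, ← h1]
                exact hstep i (by omega)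
            · apply Subtype.ext
              funext i
              show (if n < i then S else if n ≤ i then S.erase b else c i) = c i
              rcases Nat.lt_or_ge n i with h | h
              · rw [if_pos h, hn i (by omega)]
              · rw [if_neg (by omega)]
                rcases Nat.lt_or_ge i n with h2 | h2
                · rw [if_neg (by omega)]
                · have : i = n := by omega
                  subst this
                  rw [if_pos le_rfl, hceq]
        obtain ⟨G, hGbij⟩ := hG
        rw [← Nat.card_eq_of_bijective G hGbij]
        letI : ∀ b : {b // b ∈ S}, Fintype (FChain d n (S.erase b.1)) :=
          fun b => Fintype.ofFinite _
        rw [Nat.card_eq_fintype_card, Fintype.card_sigma]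
        rw [nSYT, if_pos hY]
        rw [← Finset.sum_coe_sort S (fun b => nSYT d n (S.erase b))]
        apply Finset.sum_congr rfl
        intro b _
        rw [← Nat.card_eq_fintype_card, ih]
      · haveI : IsEmpty (FChain d (n + 1) S) := by
          constructor
          rintro ⟨c, h0, hn, hstep⟩
          have := (hstep n (by omega)).2.2
          rw [hn (n + 1) le_rfl] at this
          exact hcard this
        rw [Nat.card_of_isEmpty, nSYT, if_pos hY]
        symm
        apply Finset.sum_eq_zero
        intro b hb
        by_contra hne0
        have := (nSYT_ne_zero hne0).2
        rw [card_erase_of_mem hb] at this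
        have := card_pos.mpr ⟨b, hb⟩
        omega
    · haveI : IsEmpty (FChain d (n + 1) S) := by
        constructor
        rintro ⟨c, h0, hn, hstep⟩
        have := (hstep n (by omega)).1
        rw [hn (n + 1) le_rfl] at this
        exact hY this
      rw [Nat.card_of_isEmpty, nSYT, if_neg hY]

end Chains

section Translate
variable {d n : ℕ}

lemma FChain.card_at {S : Finset (Cell d)} (c : FChain d n S) {j : ℕ} (hj : j ≤ n) :
    (c.1 j).card = j := by
  rcases Nat.eq_zero_or_pos j with rfl | hpos
  · rw [c.2.1, card_empty]
  · obtain ⟨i, rfl⟩ : ∃ i, j = i + 1 := ⟨j - 1, by omega⟩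
    exact (c.2.2.2 i (by omega)).2.2

lemma part_le (lam : DPartition d n) (k : Fin d) (x : ℕ) : lam.part k x ≤ n := by
  rcases Nat.lt_or_ge x n with hx | hx
  · have h1 : ∑ i ∈ Finset.range n, lam.part k i ≤
        ∑ k' : Fin d, ∑ i ∈ Finset.range n, lam.part k' i :=
      Finset.single_le_sum (f := fun k => ∑ i ∈ Finset.range n, lam.part k i)
        (fun _ _ => Nat.zero_le _) (mem_univ k)
    have h2 : lam.part k x ≤ ∑ i ∈ Finset.range n, lam.part k i :=
      Finset.single_le_sum (fun _ _ => Nat.zero_le _) (mem_range.mpr hx)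
    have h3 := lam.size
    omega
  · rw [lam.vanish k x hx]
    exact Nat.zero_le _

def diagD (lam : DPartition d n) : Finset (Cell d) :=
  (box d n).filter (fun c => c.2.2 < lam.part c.1 c.2.1)

lemma mem_diagD {lam : DPartition d n} {k : Fin d} {x y : ℕ} :
    (k, x, y) ∈ diagD lam ↔ y < lam.part k x := by
  rw [diagD, mem_filter, mem_box]
  constructor
  · exact fun h => h.2
  · intro h
    have hx : x < n := by
      by_contra hx
      rw [lam.vanish k x (by omega)] at h
      omega
    have := part_le lam k x
    exact ⟨⟨hx, show y < n by omega⟩, h⟩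

lemma diagD_young (lam : DPartition d n) : IsYoung (diagD lam) := by
  rintro ⟨k, x, y⟩ hc x' hx y' hy
  have hx' : x' ≤ x := hx
  have hy' : y' ≤ y := hy
  rw [mem_diagD] at hc
  show (k, x', y') ∈ diagD lam
  rw [mem_diagD]
  have := lam.antitone k hx'
  omega

lemma card_rows {N : ℕ} {S : Finset (Cell d)} (hS : S ⊆ box d N) :
    S.card = ∑ k : Fin d, ∑ x ∈ Finset.range N,
      ((Finset.range N).filter (fun y => (k, x, y) ∈ S)).card := by
  rw [← Finset.sum_product']
  rw [Finset.card_eq_sum_card_fiberwise (f := fun c : Cell d => (c.1, c.2.1))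
    (t := univ ×ˢ Finset.range N) (fun c hc => by
      rw [mem_coe, mem_product]
      exact ⟨mem_univ _, mem_range.mpr ((mem_box.mp (hS hc)).1)⟩)]
  apply Finset.sum_congr rfl
  rintro ⟨k, x⟩ -
  apply card_bij (fun c _ => c.2.2)
  · rintro ⟨k', x', y⟩ hc
    rw [mem_filter] at hc
    obtain ⟨hcS, hkx⟩ := hc
    simp only [Prod.mk.injEq] at hkx
    rw [mem_filter, mem_range]
    obtain ⟨rfl, rfl⟩ := hkx
    exact ⟨(mem_box.mp (hS hcS)).2, hcS⟩
  · rintro ⟨k1, x1, y1⟩ hc1 ⟨k2, x2, y2⟩ hc2 heq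
    rw [mem_filter] at hc1 hc2
    simp only [Prod.mk.injEq] at hc1 hc2
    dsimp only at heq
    obtain ⟨-, rfl, rfl⟩ := hc1
    obtain ⟨-, rfl, rfl⟩ := hc2
    simp [heq]
  · intro y hy
    rw [mem_filter] at hy
    exact ⟨(k, x, y), mem_filter.mpr ⟨hy.2, rfl⟩, rfl⟩

lemma diagD_card (lam : DPartition d n) : (diagD lam).card = n := by
  have hsub : diagD lam ⊆ box d n := filter_subset _ _
  have hcr := card_rows hsub
  rw [hcr]
  calc ∑ k : Fin d, ∑ x ∈ Finset.range n,
        ((Finset.range n).filter (fun y => (k, x, y) ∈ diagD lam)).card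
      = ∑ k : Fin d, ∑ x ∈ Finset.range n, lam.part k x := by
        apply Finset.sum_congr rfl
        intro k _
        apply Finset.sum_congr rfl
        intro x hx
        have hle := part_le lam k x
        have heq : (Finset.range n).filter (fun y => (k, x, y) ∈ diagD lam)
            = Finset.range (lam.part k x) := by
          ext y
          rw [mem_filter, mem_range, mem_range, mem_diagD]
          omega
        rw [heq, card_range]
    _ = n := lam.size

lemma diagD_inj : Function.Injective (diagD : DPartition d n → Finset (Cell d)) := by
  intro a b h
  have hpart : a.part = b.part := by
    funext k x
    have hiff : ∀ y, y < a.part k x ↔ y < b.part k x := by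
      intro y
      rw [← mem_diagD, ← mem_diagD, h]
    rcases Nat.lt_trichotomy (a.part k x) (b.part k x) with hlt | heq | hgt
    · have := (hiff (a.part k x)).mpr hlt; omega
    · exact heq
    · have := (hiff (b.part k x)).mp hgt; omega
  obtain ⟨pa, _, _, _⟩ := a
  obtain ⟨pb, _, _, _⟩ := b
  simp only at hpart
  subst hpart
  rfl

lemma diagD_surj {S : Finset (Cell d)} (hY : IsYoung S) (hc : S.card = n) :
    ∃ lam : DPartition d n, diagD lam = S := by
  have hlen : ∀ (k : Fin d) (x y : ℕ), ((k, x, y) ∈ S ↔ y < len S k x) :=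
    fun k x y => hY.mem_iff_lt_len
  refine ⟨⟨fun k x => len S k x, fun k => hY.len_antitone k, ?_, ?_⟩, ?_⟩
  · intro k i hi
    show len S k i = 0
    by_contra h0
    have hmem : (k, i, 0) ∈ S := (hlen k i 0).mpr (by omega)
    have hlt := (hY.coord_bound hmem).1
    omega
  · have hsub : S ⊆ box d n := by
      have := young_subset_box hY
      rwa [hc] at this
    show ∑ k : Fin d, ∑ i ∈ Finset.range n, len S k i = n
    have h2 : ∑ k : Fin d, ∑ x ∈ Finset.range n,
        ((Finset.range n).filter (fun y => (k, x, y) ∈ S)).card = n := by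
      rw [← card_rows hsub, hc]
    calc ∑ k : Fin d, ∑ i ∈ Finset.range n, len S k i
        = ∑ k : Fin d, ∑ x ∈ Finset.range n,
            ((Finset.range n).filter (fun y => (k, x, y) ∈ S)).card := by
          apply Finset.sum_congr rfl
          intro k _
          apply Finset.sum_congr rfl
          intro x _
          rw [len, hc]
      _ = n := h2
  · ext ⟨k, x, y⟩
    rw [mem_diagD]
    exact (hlen k x y).symm

lemma StdDTableau.ext' {lam : DPartition d n} {T1 T2 : StdDTableau d n lam}
    (h : T1.entry = T2.entry) : T1 = T2 := by
  obtain ⟨e1, _, _, _, _, _, _⟩ := T1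
  obtain ⟨e2, _, _, _, _, _, _⟩ := T2
  simp only at h
  subst h
  rfl

lemma entry_row_mono {lam : DPartition d n} (T : StdDTableau d n lam) (k : Fin d) (x : ℕ)
    {a b : ℕ} (hab : a ≤ b) (hb : b < lam.part k x) : T.entry k x a ≤ T.entry k x b := by
  induction b with
  | zero => have : a = 0 := by omega
            subst this; rfl
  | succ b ihb =>
    rcases Nat.lt_or_ge a (b + 1) with h | h
    · have h1 := ihb (by omega) (by omega)
      have h2 := T.row k x b hb
      omega
    · have : a = b + 1 := by omega
      subst this; rfl

lemma entry_col_mono {lam : DPartition d n} (T : StdDTableau d n lam) (k : Fin d)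
    {a b : ℕ} (hab : a ≤ b) (y : ℕ) (hb : y < lam.part k b) :
    T.entry k a y ≤ T.entry k b y := by
  induction b with
  | zero => have : a = 0 := by omega
            subst this; rfl
  | succ b ihb =>
    rcases Nat.lt_or_ge a (b + 1) with h | h
    · have hb' : y < lam.part k b := by
        have hmono : lam.part k (b + 1) ≤ lam.part k b := lam.antitone k (Nat.le_succ b)
        omega
      have h1 := ihb (by omega) hb'
      have h2 := T.col k b y hb
      omega
    · have : a = b + 1 := by omega
      subst this; rfl

end Translate

section TableauChain
variable {d n : ℕ}

def tabChainFun {lam : DPartition d n} (T : StdDTableau d n lam) (i : ℕ) : Finset (Cell d) :=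
  (diagD lam).filter (fun c => T.entry c.1 c.2.1 c.2.2 ∈ Finset.Icc 1 i)

lemma mem_tabChainFun {lam : DPartition d n} {T : StdDTableau d n lam} {i : ℕ} {k : Fin d}
    {x y : ℕ} : (k, x, y) ∈ tabChainFun T i ↔
      (k, x, y) ∈ diagD lam ∧ T.entry k x y ∈ Finset.Icc 1 i := by
  rw [tabChainFun, mem_filter]

def tabChain {lam : DPartition d n} (T : StdDTableau d n lam) : FChain d n (diagD lam) := by
  refine ⟨tabChainFun T, ?_, ?_, ?_⟩
  · ext ⟨k, x, y⟩
    rw [mem_tabChainFun, Finset.mem_Icc]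
    simp only [Finset.notMem_empty, iff_false, not_and]
    intro _
    omega
  · intro i hi
    ext ⟨k, x, y⟩
    rw [mem_tabChainFun, Finset.mem_Icc]
    constructor
    · exact fun h => h.1
    · intro h
      refine ⟨h, ?_, ?_⟩
      · have := Finset.mem_Icc.mp (T.mem k x y (mem_diagD.mp h))
        omega
      · have := Finset.mem_Icc.mp (T.mem k x y (mem_diagD.mp h))
        omega
  · intro i hi
    refine ⟨?_, ?_, ?_⟩
    · -- Young
      rintro ⟨k, x, y⟩ hc x' hx y' hy
      have hx' : x' ≤ x := hx
      have hy' : y' ≤ y := hy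
      show (k, x', y') ∈ tabChainFun T (i + 1)
      rw [mem_tabChainFun] at hc ⊢
      obtain ⟨hdiag, hicc⟩ := hc
      rw [Finset.mem_Icc] at hicc
      have hyp : y < lam.part k x := mem_diagD.mp hdiag
      have hyp' : y' < lam.part k x' := by
        have := lam.antitone k hx'
        omega
      refine ⟨mem_diagD.mpr hyp', ?_⟩
      rw [Finset.mem_Icc]
      have hm := Finset.mem_Icc.mp (T.mem k x' y' hyp')
      have h1 : T.entry k x' y' ≤ T.entry k x' y :=
        entry_row_mono T k x' hy' (by have := lam.antitone k hx'; omega)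
      have h2 : T.entry k x' y ≤ T.entry k x y :=
        entry_col_mono T k hx' y hyp
      omega
    · intro c hc
      rw [tabChainFun, mem_filter] at hc ⊢
      rw [Finset.mem_Icc] at hc ⊢
      exact ⟨hc.1, hc.2.1, by omega⟩
    · -- card
      have hbij : (tabChainFun T (i + 1)).card = (Finset.Icc 1 (i + 1)).card := by
        apply card_bij (fun c _ => T.entry c.1 c.2.1 c.2.2)
        · rintro ⟨k, x, y⟩ hc
          rw [mem_tabChainFun] at hc
          exact hc.2
        · rintro ⟨k1, x1, y1⟩ hc1 ⟨k2, x2, y2⟩ hc2 heq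
          rw [mem_tabChainFun] at hc1 hc2
          dsimp only at heq
          exact T.inj k1 x1 y1 k2 x2 y2 (mem_diagD.mp hc1.1) (mem_diagD.mp hc2.1) heq
        · intro m hm
          have hm' : m ∈ Finset.Icc 1 n := by
            rw [Finset.mem_Icc] at hm ⊢
            omega
          obtain ⟨k, x, y, hyp, hent⟩ := T.surj m hm'
          refine ⟨(k, x, y), ?_, hent⟩
          rw [mem_tabChainFun]
          refine ⟨mem_diagD.mpr hyp, ?_⟩
          rw [Finset.mem_Icc] at hm ⊢
          omega
      rw [hbij, Nat.card_Icc]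
      omega

lemma tabChain_val {lam : DPartition d n} (T : StdDTableau d n lam) :
    (tabChain T).1 = tabChainFun T := rfl

lemma tabChain_injective (lam : DPartition d n) :
    Function.Injective (tabChain (lam := lam)) := by
  intro T1 T2 heq
  have hfun := congrFun (congrArg Subtype.val heq)
  rw [tabChain_val, tabChain_val] at hfun
  apply StdDTableau.ext'
  funext k x y
  by_cases hyp : y < lam.part k x
  · have hd : (k, x, y) ∈ diagD lam := mem_diagD.mpr hyp
    have hm1 := Finset.mem_Icc.mp (T1.mem k x y hyp)
    have hm2 := Finset.mem_Icc.mp (T2.mem k x y hyp)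
    have h12 : T2.entry k x y ≤ T1.entry k x y := by
      have hmem : (k, x, y) ∈ tabChainFun T1 (T1.entry k x y) := by
        rw [mem_tabChainFun, Finset.mem_Icc]
        exact ⟨hd, by omega, le_rfl⟩
      rw [hfun (T1.entry k x y)] at hmem
      rw [mem_tabChainFun, Finset.mem_Icc] at hmem
      exact hmem.2.2
    have h21 : T1.entry k x y ≤ T2.entry k x y := by
      have hmem : (k, x, y) ∈ tabChainFun T2 (T2.entry k x y) := by
        rw [mem_tabChainFun, Finset.mem_Icc]
        exact ⟨hd, by omega, le_rfl⟩
      rw [← hfun (T2.entry k x y)] at hmem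
      rw [mem_tabChainFun, Finset.mem_Icc] at hmem
      exact hmem.2.2
    omega
  · rw [T1.outside k x y hyp, T2.outside k x y hyp]

lemma tabChain_surjective (lam : DPartition d n) :
    Function.Surjective (tabChain (lam := lam)) := by
  intro c
  set cnt : Cell d → ℕ :=
    fun b => ((Finset.Icc 1 n).filter (fun i => b ∈ c.1 i)).card with hcntdef
  have hdc : (diagD lam).card = n := diagD_card lam
  have hcnt : ∀ b ∈ diagD lam, 1 ≤ cnt b ∧ cnt b ≤ n := by
    intro b hb
    have hnpos : 0 < n := by
      rw [← hdc]
      exact card_pos.mpr ⟨b, hb⟩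
    constructor
    · apply card_pos.mpr
      refine ⟨n, ?_⟩
      rw [mem_filter, Finset.mem_Icc]
      exact ⟨⟨hnpos, le_rfl⟩, by rw [c.2.2.1 n le_rfl]; exact hb⟩
    · calc cnt b ≤ (Finset.Icc 1 n).card := card_filter_le _ _
        _ = n := by rw [Nat.card_Icc]; omega
  have hiff : ∀ b ∈ diagD lam, ∀ i : ℕ, (b ∈ c.1 i ↔ n + 1 - cnt b ≤ i) := by
    intro b hb i
    obtain ⟨hc1, hcn⟩ := hcnt b hb
    constructor
    · intro hbi
      rcases Nat.lt_or_ge n i with h | h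
      · omega
      · -- i ≤ n
        have hi1 : 1 ≤ i := by
          by_contra h0
          have : i = 0 := by omega
          subst this
          rw [c.2.1] at hbi
          exact absurd hbi (Finset.notMem_empty b)
        have hsub : Finset.Icc i n ⊆ (Finset.Icc 1 n).filter (fun j => b ∈ c.1 j) := by
          intro j hj
          rw [Finset.mem_Icc] at hj
          rw [mem_filter, Finset.mem_Icc]
          exact ⟨⟨by omega, hj.2⟩, c.mono hj.1 hbi⟩
        have hcle := card_le_card hsub
        rw [Nat.card_Icc] at hcle
        have h2 : n + 1 - i ≤ cnt b := hcle
        omega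
    · intro hle
      rcases Nat.lt_or_ge i n with h | h
      · by_contra hnotmem
        have hsub : (Finset.Icc 1 n).filter (fun j => b ∈ c.1 j) ⊆ Finset.Icc (i + 1) n := by
          intro j hj
          rw [mem_filter, Finset.mem_Icc] at hj
          rw [Finset.mem_Icc]
          refine ⟨?_, hj.1.2⟩
          by_contra hji
          exact hnotmem (c.mono (show j ≤ i by omega) hj.2)
        have hcle := card_le_card hsub
        rw [Nat.card_Icc] at hcle
        have h2 : cnt b ≤ n + 1 - (i + 1) := hcle
        omega
      · rw [c.2.2.1 i h]
        exact hb
  have hsdiff : ∀ t, 1 ≤ t → t ≤ n → ∀ b1 b2 : Cell d, b1 ∈ c.1 t → b2 ∈ c.1 t →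
      b1 ∉ c.1 (t - 1) → b2 ∉ c.1 (t - 1) → b1 = b2 := by
    intro t ht1 htn b1 b2 hb1 hb2 hnb1 hnb2
    have hsub : c.1 (t - 1) ⊆ c.1 t := c.mono (by omega)
    have hcards : (c.1 t \ c.1 (t - 1)).card = 1 := by
      rw [card_sdiff_of_subset hsub, c.card_at htn, c.card_at (show t - 1 ≤ n by omega)]
      omega
    have hm1 : b1 ∈ c.1 t \ c.1 (t - 1) := mem_sdiff.mpr ⟨hb1, hnb1⟩
    have hm2 : b2 ∈ c.1 t \ c.1 (t - 1) := mem_sdiff.mpr ⟨hb2, hnb2⟩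
    exact Finset.card_le_one.mp (le_of_eq hcards) b1 hm1 b2 hm2
  -- define the tableau
  refine ⟨⟨fun k x y => if y < lam.part k x then n + 1 - cnt (k, x, y) else 0,
    ?_, ?_, ?_, ?_, ?_, ?_⟩, ?_⟩
  · intro k x y h
    rw [if_neg h]
  · intro k x y h
    rw [if_pos h, Finset.mem_Icc]
    have := hcnt (k, x, y) (mem_diagD.mpr h)
    omega
  · intro k x y k' x' y' hy hy' heq
    rw [if_pos hy, if_pos hy'] at heq
    have hd1 : (k, x, y) ∈ diagD lam := mem_diagD.mpr hy
    have hd2 : (k', x', y') ∈ diagD lam := mem_diagD.mpr hy'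
    obtain ⟨ha1, ha2⟩ := hcnt _ hd1
    obtain ⟨hb1, hb2⟩ := hcnt _ hd2
    set t := n + 1 - cnt (k, x, y) with hT
    have ht1 : 1 ≤ t := by omega
    have htn : t ≤ n := by omega
    have hmem1 : (k, x, y) ∈ c.1 t := (hiff _ hd1 t).mpr (by omega)
    have hmem2 : (k', x', y') ∈ c.1 t := (hiff _ hd2 t).mpr (by omega)
    have hno1 : (k, x, y) ∉ c.1 (t - 1) := by
      intro hmem
      have := (hiff _ hd1 (t - 1)).mp hmem
      omega
    have hno2 : (k', x', y') ∉ c.1 (t - 1) := by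
      intro hmem
      have := (hiff _ hd2 (t - 1)).mp hmem
      omega
    exact hsdiff t ht1 htn _ _ hmem1 hmem2 hno1 hno2
  · intro m hm
    rw [Finset.mem_Icc] at hm
    have hns : ¬ c.1 m ⊆ c.1 (m - 1) := by
      intro hsub
      have := card_le_card hsub
      rw [c.card_at (show m ≤ n by omega), c.card_at (show m - 1 ≤ n by omega)] at this
      omega
    obtain ⟨b, hbm, hbm1⟩ := Finset.not_subset.mp hns
    have hbd : b ∈ diagD lam := c.subset_top m hbm
    obtain ⟨k, x, y⟩ := b
    refine ⟨k, x, y, mem_diagD.mp hbd, ?_⟩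
    rw [if_pos (mem_diagD.mp hbd)]
    have h1 := (hiff _ hbd m).mp hbm
    have h2 : ¬ (n + 1 - cnt (k, x, y) ≤ m - 1) := fun h => hbm1 ((hiff _ hbd (m - 1)).mpr h)
    omega
  · intro k x y hy1
    have hy : y < lam.part k x := by omega
    rw [if_pos hy, if_pos hy1]
    have hd1 : (k, x, y) ∈ diagD lam := mem_diagD.mpr hy
    have hd2 : (k, x, y + 1) ∈ diagD lam := mem_diagD.mpr hy1
    obtain ⟨ha1, ha2⟩ := hcnt _ hd1
    obtain ⟨hb1, hb2⟩ := hcnt _ hd2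
    set t := n + 1 - cnt (k, x, y + 1) with hT
    have hmem2 : (k, x, y + 1) ∈ c.1 t := (hiff _ hd2 t).mpr (by omega)
    have hY : IsYoung (c.1 t) := by
      have ht : t - 1 + 1 = t := by omega
      have := (c.2.2.2 (t - 1) (by omega)).1
      rwa [ht] at this
    have hmem1 : (k, x, y) ∈ c.1 t := hY.mem hmem2 le_rfl (by omega)
    have hle : n + 1 - cnt (k, x, y) ≤ t := (hiff _ hd1 t).mp hmem1
    rcases Nat.lt_or_ge (n + 1 - cnt (k, x, y)) t with hlt | hge
    · exact hlt
    · exfalso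
      have heqt : n + 1 - cnt (k, x, y) = t := by omega
      have hno1 : (k, x, y) ∉ c.1 (t - 1) := by
        intro hmem
        have := (hiff _ hd1 (t - 1)).mp hmem
        omega
      have hno2 : (k, x, y + 1) ∉ c.1 (t - 1) := by
        intro hmem
        have := (hiff _ hd2 (t - 1)).mp hmem
        omega
      have := hsdiff t (by omega) (by omega) _ _ hmem1 hmem2 hno1 hno2
      simp at this
  · intro k x y hy1
    have hy : y < lam.part k x := by
      have hmono : lam.part k (x + 1) ≤ lam.part k x := lam.antitone k (Nat.le_succ x)
      omega
    rw [if_pos hy, if_pos hy1]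
    have hd1 : (k, x, y) ∈ diagD lam := mem_diagD.mpr hy
    have hd2 : (k, x + 1, y) ∈ diagD lam := mem_diagD.mpr hy1
    obtain ⟨ha1, ha2⟩ := hcnt _ hd1
    obtain ⟨hb1, hb2⟩ := hcnt _ hd2
    set t := n + 1 - cnt (k, x + 1, y) with hT
    have hmem2 : (k, x + 1, y) ∈ c.1 t := (hiff _ hd2 t).mpr (by omega)
    have hY : IsYoung (c.1 t) := by
      have ht : t - 1 + 1 = t := by omega
      have := (c.2.2.2 (t - 1) (by omega)).1
      rwa [ht] at this
    have hmem1 : (k, x, y) ∈ c.1 t := hY.mem hmem2 (by omega) le_rfl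
    have hle : n + 1 - cnt (k, x, y) ≤ t := (hiff _ hd1 t).mp hmem1
    rcases Nat.lt_or_ge (n + 1 - cnt (k, x, y)) t with hlt | hge
    · exact hlt
    · exfalso
      have hno1 : (k, x, y) ∉ c.1 (t - 1) := by
        intro hmem
        have := (hiff _ hd1 (t - 1)).mp hmem
        omega
      have hno2 : (k, x + 1, y) ∉ c.1 (t - 1) := by
        intro hmem
        have := (hiff _ hd2 (t - 1)).mp hmem
        omega
      have := hsdiff t (by omega) (by omega) _ _ hmem1 hmem2 hno1 hno2
      simp at this
  · -- tabChain T = c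
    apply Subtype.ext
    rw [tabChain_val]
    funext i
    ext ⟨k, x, y⟩
    rw [mem_tabChainFun]
    show ((k, x, y) ∈ diagD lam ∧
      (if y < lam.part k x then n + 1 - cnt (k, x, y) else 0) ∈ Finset.Icc 1 i)
      ↔ (k, x, y) ∈ c.1 i
    by_cases hd : (k, x, y) ∈ diagD lam
    · have hy : y < lam.part k x := mem_diagD.mp hd
      rw [if_pos hy, Finset.mem_Icc]
      obtain ⟨ha1, ha2⟩ := hcnt _ hd
      constructor
      · intro h
        exact (hiff _ hd i).mpr h.2.2
      · intro h
        exact ⟨hd, by omega, (hiff _ hd i).mp h⟩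
    · rw [if_neg (fun hy => hd (mem_diagD.mpr hy))]
      constructor
      · intro h
        exact absurd h.1 hd
      · intro h
        exact absurd (c.subset_top i h) hd

lemma card_tableau (lam : DPartition d n) :
    Nat.card (StdDTableau d n lam) = nSYT d n (diagD lam) := by
  rw [← card_FChain n (diagD lam)]
  exact Nat.card_eq_of_bijective _ ⟨tabChain_injective lam, tabChain_surjective lam⟩

instance StdDTableau.finite (lam : DPartition d n) : Finite (StdDTableau d n lam) :=
  Finite.of_injective _ (tabChain_injective lam)

instance DPartition.finite : Finite (DPartition d n) := by
  apply Finite.of_injective (fun lam : DPartition d n =>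
    (⟨diagD lam, mem_powerset.mpr (filter_subset _ _)⟩ : ↥(box d n).powerset))
  intro a b h
  exact diagD_inj (Subtype.ext_iff.mp h)

end TableauChain

/-- The sum over all `d`-partitions `λ` of `n` of the square of the number of
standard `d`-tableaux of shape `λ` equals `d^n · n!` (stated as a count of the total space of
pairs of standard `d`-tableaux of a common shape). -/
theorem stmt5 (d n : ℕ) :
    Nat.card ((lam : DPartition d n) × (StdDTableau d n lam × StdDTableau d n lam)) =
      d ^ n * n ! := by
  letI : Fintype (DPartition d n) := Fintype.ofFinite _
  letI : ∀ lam : DPartition d n, Fintype (StdDTableau d n lam × StdDTableau d n lam) :=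
    fun lam => Fintype.ofFinite _
  rw [Nat.card_eq_fintype_card, Fintype.card_sigma]
  have h1 : ∀ lam : DPartition d n,
      Fintype.card (StdDTableau d n lam × StdDTableau d n lam)
        = nSYT d n (diagD lam) * nSYT d n (diagD lam) := by
    intro lam
    rw [← Nat.card_eq_fintype_card, Nat.card_prod, card_tableau]
  rw [Finset.sum_congr rfl (fun lam _ => h1 lam)]
  rw [← Esum_eq (d := d) n, Esum]
  apply Finset.sum_bij_ne_zero (fun lam _ _ => diagD lam)
  · intro lam _ _
    rw [mem_powerset]
    exact filter_subset _ _
  · intro a _ _ b _ _ h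
    exact diagD_inj h
  · intro S hS hne
    have hn : nSYT d n S ≠ 0 := fun h => hne (by rw [h]; ring)
    obtain ⟨hY, hc⟩ := nSYT_ne_zero hn
    obtain ⟨lam, hlam⟩ := diagD_surj hY hc
    exact ⟨lam, mem_univ _, by rw [hlam]; exact hne, hlam⟩
  · intro lam _ _
    rfl
end

section
/- In the affine Yokonuma–Hecke algebra Ŷ_{d,n}(q), the elements X_1,…,X_n defined by X_{i+1} := g_i X_i g_i pairwise commute: X_i X_j = X_j X_i for all i, j. -/
open Finset

/-- The ground ring `ℂ[q, q⁻¹]` of Laurent polynomials, with `q` the indeterminate `T 1`. -/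
abbrev LP := LaurentPolynomial ℂ

noncomputable def qq : LP := LaurentPolynomial.T 1
noncomputable def qqinv : LP := LaurentPolynomial.T (-1)

/-- Generators of the affine Yokonuma–Hecke algebra `Ŷ_{d,n+1}(q)`: the braiding generators
`g 0, …, g (n−1)`, the framing generators `t 0, …, t n`, and `X₁^{±1}`. -/
inductive AYGen (d n : ℕ) : Type
  | g : Fin n → AYGen d n
  | t : Fin (n + 1) → AYGen d n
  | X : AYGen d n
  | Xinv : AYGen d n

/-- The free `ℂ[q,q⁻¹]`-algebra on the generators. -/
abbrev AYFree (d n : ℕ) := FreeAlgebra LP (AYGen d n)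

noncomputable def Gt (d n : ℕ) (j : Fin (n + 1)) : AYFree d n := FreeAlgebra.ι LP (AYGen.t j)
noncomputable def Gg (d n : ℕ) (i : Fin n) : AYFree d n := FreeAlgebra.ι LP (AYGen.g i)
noncomputable def GX (d n : ℕ) : AYFree d n := FreeAlgebra.ι LP AYGen.X
noncomputable def GXinv (d n : ℕ) : AYFree d n := FreeAlgebra.ι LP AYGen.Xinv

/-- The element `e_i = (1/d) Σ_{s=0}^{d−1} t_i^s t_{i+1}^{−s}` (with `t_{i+1}^{−s}`
realised as `t_{i+1}^{d−s}`, using `t_{i+1}^d = 1`), in the free algebra. -/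
noncomputable def efree (d n : ℕ) (i : Fin n) : AYFree d n :=
  (LaurentPolynomial.C ((d : ℂ)⁻¹)) •
    ∑ s ∈ range d, (Gt d n i.castSucc) ^ s * (Gt d n i.succ) ^ (d - s)

/-- The defining relations of the affine Yokonuma–Hecke algebra `Ŷ_{d,n+1}(q)`. -/
inductive AYRel (d n : ℕ) : AYFree d n → AYFree d n → Prop
  | braid_far : ∀ i j : Fin n, (i : ℕ) + 1 < (j : ℕ) →
      AYRel d n (Gg d n i * Gg d n j) (Gg d n j * Gg d n i)
  | braid : ∀ i j : Fin n, (i : ℕ) + 1 = (j : ℕ) →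
      AYRel d n (Gg d n i * Gg d n j * Gg d n i) (Gg d n j * Gg d n i * Gg d n j)
  | comm_t : ∀ j k : Fin (n + 1), AYRel d n (Gt d n j * Gt d n k) (Gt d n k * Gt d n j)
  | tg : ∀ (i : Fin n) (j : Fin (n + 1)),
      AYRel d n (Gt d n j * Gg d n i)
        (Gg d n i * Gt d n (Equiv.swap i.castSucc i.succ j))
  | t_order : ∀ j : Fin (n + 1), AYRel d n ((Gt d n j) ^ d) 1
  | quad : ∀ i : Fin n,
      AYRel d n (Gg d n i * Gg d n i) (1 + (qq - qqinv) • (efree d n i * Gg d n i))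
  | X_inv_left : AYRel d n (GX d n * GXinv d n) 1
  | X_inv_right : AYRel d n (GXinv d n * GX d n) 1
  | XgXg : ∀ i : Fin n, (i : ℕ) = 0 →
      AYRel d n (GX d n * Gg d n i * GX d n * Gg d n i)
        (Gg d n i * GX d n * Gg d n i * GX d n)
  | Xg : ∀ i : Fin n, (i : ℕ) ≠ 0 →
      AYRel d n (GX d n * Gg d n i) (Gg d n i * GX d n)
  | Xt : ∀ j : Fin (n + 1), AYRel d n (GX d n * Gt d n j) (Gt d n j * GX d n)

/-- The affine Yokonuma–Hecke algebra `Ŷ_{d,n+1}(q)` over `ℂ[q,q⁻¹]`. -/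
abbrev AYH (d n : ℕ) := RingQuot (AYRel d n)

noncomputable def tA (d n : ℕ) (j : Fin (n + 1)) : AYH d n :=
  RingQuot.mkAlgHom LP (AYRel d n) (Gt d n j)

noncomputable def gA (d n : ℕ) (i : Fin n) : AYH d n :=
  RingQuot.mkAlgHom LP (AYRel d n) (Gg d n i)

noncomputable def XA (d n : ℕ) : AYH d n :=
  RingQuot.mkAlgHom LP (AYRel d n) (GX d n)

/-- The commuting family `X_1, X_2, …` defined by `X_{i+1} = g_i X_i g_i`
(0-indexed: `Xseq d n a` is `X_{a+1}`; junk value `1` for `a > n`). -/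
noncomputable def Xseq (d n : ℕ) : ℕ → AYH d n
  | 0 => XA d n
  | a + 1 => if h : a < n then gA d n ⟨a, h⟩ * Xseq d n a * gA d n ⟨a, h⟩ else 1

section Aux

variable {d n : ℕ}

private lemma rel_eq {x y : AYFree d n} (h : AYRel d n x y) :
    RingQuot.mkAlgHom LP (AYRel d n) x = RingQuot.mkAlgHom LP (AYRel d n) y :=
  RingQuot.mkAlgHom_rel LP h

private lemma gX_comm (k : Fin n) (hk : (k : ℕ) ≠ 0) :
    XA d n * gA d n k = gA d n k * XA d n := by
  have h := rel_eq (AYRel.Xg (d := d) k hk)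
  rw [map_mul, map_mul] at h
  exact h

private lemma gg_comm (i j : Fin n) (hij : (i : ℕ) + 1 < (j : ℕ)) :
    Gg d n i = Gg d n i := rfl

private lemma braid_far_eq (i j : Fin n) (hij : (i : ℕ) + 1 < (j : ℕ)) :
    gA d n i * gA d n j = gA d n j * gA d n i := by
  have h := rel_eq (AYRel.braid_far (d := d) i j hij)
  rw [map_mul, map_mul] at h
  exact h

private lemma braid_eq (i j : Fin n) (hij : (i : ℕ) + 1 = (j : ℕ)) :
    gA d n i * gA d n j * gA d n i = gA d n j * gA d n i * gA d n j := by
  have h := rel_eq (AYRel.braid (d := d) i j hij)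
  rw [map_mul, map_mul, map_mul, map_mul] at h
  exact h

private lemma XgXg_eq (i : Fin n) (hi : (i : ℕ) = 0) :
    XA d n * gA d n i * XA d n * gA d n i = gA d n i * XA d n * gA d n i * XA d n := by
  have h := rel_eq (AYRel.XgXg (d := d) i hi)
  simp only [map_mul] at h
  exact h

private lemma Xseq_succ (a : ℕ) (ha : a < n) :
    Xseq d n (a + 1) = gA d n ⟨a, ha⟩ * Xseq d n a * gA d n ⟨a, ha⟩ := by
  rw [Xseq, dif_pos ha]

/-- `g_k` commutes with `X_{a+1}` when `a < k`. -/
private lemma far : ∀ (a : ℕ) (k : Fin n), a < (k : ℕ) →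
    gA d n k * Xseq d n a = Xseq d n a * gA d n k
  | 0, k, hk => (gX_comm k (by omega)).symm
  | a + 1, k, hk => by
    have han : a < n := by have := k.isLt; omega
    have hgg : Commute (gA d n k) (gA d n ⟨a, han⟩) :=
      (braid_far_eq ⟨a, han⟩ k (by simpa using hk)).symm
    have hx : Commute (gA d n k) (Xseq d n a) := far a k (by omega)
    rw [Xseq_succ a han]
    exact (hgg.mul_right hx).mul_right hgg

/-- Adjacent `X`'s commute. -/
private lemma adj : ∀ a : ℕ, a + 1 ≤ n →
    Xseq d n a * Xseq d n (a + 1) = Xseq d n (a + 1) * Xseq d n a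
  | 0, h0 => by
    rw [Xseq_succ 0 h0]
    have h := XgXg_eq (d := d) ⟨0, h0⟩ rfl
    show XA d n * (gA d n ⟨0, h0⟩ * XA d n * gA d n ⟨0, h0⟩) = _
    simp only [← mul_assoc]
    exact h
  | a + 1, h1 => by
    have ha : a < n := by omega
    have ha1 : a + 1 < n := h1
    set g := gA d n ⟨a, ha⟩ with hgdef
    set k := gA d n ⟨a + 1, ha1⟩ with hkdef
    set x := Xseq d n a with hxdef
    have hb : g * k * g = k * g * k := braid_eq ⟨a, ha⟩ ⟨a + 1, ha1⟩ rfl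
    have hb' : ∀ y, g * (k * (g * y)) = k * (g * (k * y)) := by
      intro y; simp only [← mul_assoc]; rw [hb]
    have hb2 : k * (g * k) = g * (k * g) := by
      rw [← mul_assoc, ← hb, mul_assoc]
    have hxk : k * x = x * k := far a ⟨a + 1, ha1⟩ (Nat.lt_succ_self a)
    have hxk' : ∀ y, x * (k * y) = k * (x * y) := by
      intro y; simp only [← mul_assoc]; rw [hxk]
    have hkx' : ∀ y, k * (x * y) = x * (k * y) := fun y => (hxk' y).symm
    have ihe : x * g * x * g = g * x * g * x := by
      have := adj a (by omega)
      rw [Xseq_succ a ha] at this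
      simp only [← mul_assoc] at this
      exact this
    have ih' : ∀ y, x * (g * (x * (g * y))) = g * (x * (g * (x * y))) := by
      intro y; simp only [← mul_assoc]; rw [ihe]
    rw [Xseq_succ (a + 1) ha1, Xseq_succ a ha, ← hgdef, ← hkdef, ← hxdef]
    simp only [mul_assoc]
    rw [hb' (x * (g * k)), hxk' (g * (k * (x * (g * k)))), hkx' (g * k), hb2,
      ih' (k * g), hb' (x * g), hxk' (g * (k * (x * g))), hkx' g,
      ← hb' (x * (g * (x * (k * g))))]

private lemma Xcomm : ∀ (b a : ℕ), a < b → b ≤ n →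
    Xseq d n a * Xseq d n b = Xseq d n b * Xseq d n a
  | 0, a, hab, _ => absurd hab (Nat.not_lt_zero a)
  | b + 1, a, hab, hbn => by
    have hbn' : b < n := hbn
    rcases eq_or_lt_of_le (Nat.lt_succ_iff.mp hab) with h | h
    · subst h; exact adj a hbn
    · have h1 : Commute (Xseq d n a) (gA d n ⟨b, hbn'⟩) := (far a ⟨b, hbn'⟩ h).symm
      have h2 : Commute (Xseq d n a) (Xseq d n b) := Xcomm b a h (by omega)
      rw [Xseq_succ b hbn']
      exact (h1.mul_right h2).mul_right h1

end Aux

/-- In the affine Yokonuma–Hecke algebra `Ŷ_{d,n+1}(q)`, the elements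
`X_1, …, X_{n+1}` defined by `X_{i+1} = g_i X_i g_i` pairwise commute. -/
theorem stmt10 (d n : ℕ) (hd : 1 ≤ d) (a b : ℕ) (ha : a ≤ n) (hb : b ≤ n) :
    Xseq d n a * Xseq d n b = Xseq d n b * Xseq d n a := by
  rcases lt_trichotomy a b with h | h | h
  · exact Xcomm b a h hb
  · rw [h]
  · exact (Xcomm a b h ha).symm
end

section
/- Let 𝒯 be a standard d-tableau and suppose entries j < k lie in the same component and the same diagonal (p(𝒯|j) = p(𝒯|k) and y−x equal). Then k − j ≥ 3, and there exist i₁, i₂ with j+1 ≤ i₁, i₂ ≤ k−1 lying in the same component such that the node of i₁ has diagonal value one less and the node of i₂ has diagonal value one more than that of j. -/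
open Finset

lemma col_lt' (d n : ℕ) (lam : DPartition d n) (T : StdDTableau d n lam)
    (k : Fin d) : ∀ (m x y : ℕ), y < lam.part k (x + m + 1) →
    T.entry k x y < T.entry k (x + m + 1) y := by
  intro m
  induction m with
  | zero => intro x y h; exact T.col k x y h
  | succ m ih =>
    intro x y h
    have h1 : y < lam.part k (x + m + 1) :=
      lt_of_lt_of_le h (lam.antitone k (by omega))
    calc T.entry k x y < T.entry k (x + m + 1) y := ih x y h1
      _ < T.entry k (x + m + 1 + 1) y := T.col k (x + m + 1) y (by

        have : x + m + 1 + 1 = x + (m+1) + 1 := by ring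
        rwa [this])

lemma col_lt (d n : ℕ) (lam : DPartition d n) (T : StdDTableau d n lam)
    (k : Fin d) (x x' y : ℕ) (hx : x < x') (h : y < lam.part k x') :
    T.entry k x y < T.entry k x' y := by
  obtain ⟨m, rfl⟩ : ∃ m, x' = x + m + 1 := ⟨x' - x - 1, by omega⟩
  exact col_lt' d n lam T k m x y h

lemma row_lt' (d n : ℕ) (lam : DPartition d n) (T : StdDTableau d n lam)
    (k : Fin d) : ∀ (m x y : ℕ), y + m + 1 < lam.part k x →
    T.entry k x y < T.entry k x (y + m + 1) := by
  intro m
  induction m with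
  | zero => intro x y h; exact T.row k x y h
  | succ m ih =>
    intro x y h
    have h1 : y + m + 1 < lam.part k x := by omega
    calc T.entry k x y < T.entry k x (y + m + 1) := ih x y h1
      _ < T.entry k x (y + m + 1 + 1) := T.row k x (y + m + 1) (by omega)

lemma row_lt (d n : ℕ) (lam : DPartition d n) (T : StdDTableau d n lam)
    (k : Fin d) (x y y' : ℕ) (hy : y < y') (h : y' < lam.part k x) :
    T.entry k x y < T.entry k x y' := by
  obtain ⟨m, rfl⟩ : ∃ m, y' = y + m + 1 := ⟨y' - y - 1, by omega⟩
  exact row_lt' d n lam T k m x y h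

lemma mono_lt (d n : ℕ) (lam : DPartition d n) (T : StdDTableau d n lam)
    (k : Fin d) (x y x' y' : ℕ) (hx : x ≤ x') (hy : y ≤ y')
    (hne : x < x' ∨ y < y') (h : y' < lam.part k x') :
    T.entry k x y < T.entry k x' y' := by
  have h1 : y' < lam.part k x := lt_of_lt_of_le h (lam.antitone k hx)
  rcases lt_or_eq_of_le hx with hx' | rfl
  · rcases lt_or_eq_of_le hy with hy' | rfl
    · exact lt_trans (row_lt d n lam T k x y y' hy' h1) (col_lt d n lam T k x x' y' hx' h)
    · exact col_lt d n lam T k x x' y hx' h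
  · exact row_lt d n lam T k x y y' (hne.resolve_left (lt_irrefl x)) h

/-- If in a standard `d`-tableau the entries `j < k` lie in the same component
and on the same diagonal, then `k − j ≥ 3`, and there exist entries `i₁, i₂` with
`j + 1 ≤ i₁, i₂ ≤ k − 1` lying in the same component, whose nodes have diagonal value
one less, resp. one more, than that of the node of `j`. -/
theorem stmt14 (d n : ℕ) (lam : DPartition d n) (T : StdDTableau d n lam)
    (k : Fin d) (xj yj xk yk : ℕ)
    (hj : yj < lam.part k xj) (hk : yk < lam.part k xk)
    (hlt : T.entry k xj yj < T.entry k xk yk)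
    (hdiag : (yj : ℤ) - (xj : ℤ) = (yk : ℤ) - (xk : ℤ)) :
    T.entry k xj yj + 3 ≤ T.entry k xk yk ∧
    (∃ x y, y < lam.part k x ∧
        T.entry k xj yj + 1 ≤ T.entry k x y ∧ T.entry k x y + 1 ≤ T.entry k xk yk ∧
        (y : ℤ) - (x : ℤ) = (yj : ℤ) - (xj : ℤ) - 1) ∧
    (∃ x y, y < lam.part k x ∧
        T.entry k xj yj + 1 ≤ T.entry k x y ∧ T.entry k x y + 1 ≤ T.entry k xk yk ∧
        (y : ℤ) - (x : ℤ) = (yj : ℤ) - (xj : ℤ) + 1) := by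

  -- establish xj < xk and yj < yk
  have hne : xj ≠ xk := by
    intro h
    have hy : yj = yk := by omega
    subst h; subst hy; exact lt_irrefl _ hlt
  have hxlt : xj < xk := by
    rcases lt_or_gt_of_ne hne with h | h
    · exact h
    · exfalso
      have hy : yk < yj := by omega
      have := mono_lt d n lam T k xk yk xj yj (le_of_lt h) (le_of_lt hy) (Or.inl h) hj
      omega
  have hylt : yj < yk := by omega
  -- witness 1: (xj+1, yj)
  have h1s : yj < lam.part k (xj + 1) := by
    have := lam.antitone k (show xj + 1 ≤ xk by omega)
    omega
  have h1lo : T.entry k xj yj < T.entry k (xj+1) yj := T.col k xj yj h1s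
  have h1hi : T.entry k (xj+1) yj < T.entry k xk yk :=
    mono_lt d n lam T k (xj+1) yj xk yk (by omega) (le_of_lt hylt) (Or.inr hylt) hk
  -- witness 2: (xj, yj+1)
  have h2s : yj + 1 < lam.part k xj := by
    have := lt_of_lt_of_le hk (lam.antitone k (le_of_lt hxlt))
    omega
  have h2lo : T.entry k xj yj < T.entry k xj (yj+1) := T.row k xj yj h2s
  have h2hi : T.entry k xj (yj+1) < T.entry k xk yk :=
    mono_lt d n lam T k xj (yj+1) xk yk (le_of_lt hxlt) (by omega) (Or.inl hxlt) hk
  have hne12 : T.entry k (xj+1) yj ≠ T.entry k xj (yj+1) := by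
    intro h
    have := T.inj k (xj+1) yj k xj (yj+1) h1s h2s h
    simp at this
  refine ⟨by omega, ⟨xj+1, yj, h1s, by omega, by omega, by push_cast; ring⟩,
    ⟨xj, yj+1, h2s, by omega, by omega, by push_cast; ring⟩⟩
end
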